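/- If there exists an optimal incentive-compatible platform policy, then there exists an optimal incentive-compatible platform policy that is lowest-type-targeting, obtained by finitely many applications of the splitting construction, each preserving x^T, α^T, the sender's truthful utility value (hence incentive-compatibility), and the platform's utility. -/

import Mathlib

open Finset

/-- A platform policy: a truthful posterior `xT` with weight `alphaT`, and `m` non-truthful
posteriors `x i` with weights `alpha i`. -/
structure Policy (n : ℕ) where
  m : ℕ
  alphaT : ℝ
  alpha : Fin m → ℝ
  xT : Fin n → ℝ
  x : Fin m → Fin n → ℝ

/-- Bayes-plausibility with respect to the prior `xstar`. -/
def BP (n : ℕ) (xstar : Fin n → ℝ) (σ : Policy n) : Prop :=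
  0 ≤ σ.alphaT ∧ (∀ i, 0 ≤ σ.alpha i) ∧ σ.alphaT + ∑ i, σ.alpha i = 1 ∧
    (∀ j, 0 ≤ σ.xT j) ∧ (∑ j, σ.xT j = 1) ∧
    (∀ i j, 0 ≤ σ.x i j) ∧ (∀ i, ∑ j, σ.x i j = 1) ∧
    (∀ j, σ.alphaT * σ.xT j + ∑ i, σ.alpha i * σ.x i j = xstar j)

/-- The sender's one-shot utility from lying probability `p` against distribution `w`. -/
noncomputable def USone (n : ℕ) (θ : Fin n → ℝ) (μ : ℝ) (p : ℝ) (w : Fin n → ℝ) : ℝ :=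
  ∑ j, w j * (if p ≤ μ / (1 - μ) * θ j then (1 : ℝ) else 0) * (μ + (1 - μ) * p)

/-- Sender's truthful utility `V(σ) = U_S(σ, p_T)`. -/
noncomputable def USpol (n : ℕ) (θ : Fin n → ℝ) (μ : ℝ) (pstar : (Fin n → ℝ) → ℝ)
    (σ : Policy n) : ℝ :=
  σ.alphaT * μ + ∑ i, σ.alpha i * USone n θ μ (pstar (σ.x i)) (σ.x i)

/-- Platform's utility under truthful play. -/
noncomputable def UPpol (n : ℕ) (θ : Fin n → ℝ) (μ : ℝ) (pstar : (Fin n → ℝ) → ℝ)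
    (σ : Policy n) : ℝ :=
  σ.alphaT * μ * (∑ j, σ.xT j * θ j) + ∑ i, σ.alpha i * ∑ j, σ.x i j *
    (if pstar (σ.x i) ≤ μ / (1 - μ) * θ j then (1 : ℝ) else 0) *
      (μ * θ j - (1 - μ) * pstar (σ.x i))

/-- Lowest-type-targeting. -/
def LTT (n : ℕ) (θ : Fin n → ℝ) (μ : ℝ) (pstar : (Fin n → ℝ) → ℝ) (σ : Policy n) : Prop :=
  ∀ i, ∃ j : Fin n, 0 < σ.x i j ∧ (∀ k, 0 < σ.x i k → j ≤ k) ∧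
    pstar (σ.x i) = μ / (1 - μ) * θ j

/-- Incentive-compatibility: the IC constraints of the characterization lemma, which depend
only on the truthful posterior `σ.xT` and the truthful value `V(σ) = USpol σ`. -/
noncomputable def ICpol (n : ℕ) (θ : Fin n → ℝ) (μ δ ubar : ℝ)
    (pstar : (Fin n → ℝ) → ℝ) (σ : Policy n) : Prop :=
  ∀ k : Fin n,
    USpol n θ μ pstar σ ≥
      (1 - δ) / δ *
          (μ / (1 - μ) *
            (((∑ j ∈ Finset.univ.filter (fun j => k ≤ j), σ.xT j) - 1) /
              ((∑ j ∈ Finset.univ.filter (fun j => k ≤ j), σ.xT j) *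
                (μ / (1 - μ) * θ k))) + 1)
        + ubar

open Finset

namespace S16

variable {n : ℕ}

noncomputable def tauv (θ : Fin n → ℝ) (μ : ℝ) (j : Fin n) : ℝ := μ / (1 - μ) * θ j
noncomputable def Mv (θ : Fin n → ℝ) (μ : ℝ) (j : Fin n) : ℝ := μ + (1 - μ) * tauv θ μ j
noncomputable def Gv (l : Fin n) (w : Fin n → ℝ) : ℝ := ∑ j, if l ≤ j then w j else 0

def Dist (w : Fin n → ℝ) : Prop := (∀ j, 0 ≤ w j) ∧ ∑ j, w j = 1

def Good (θ : Fin n → ℝ) (μ : ℝ) (j : Fin n) (v : Fin n → ℝ) : Prop :=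
  0 < v j ∧ (∀ k, v k ≠ 0 → j ≤ k) ∧ ∀ l, Mv θ μ l * Gv l v ≤ Mv θ μ j

noncomputable def phiv (θ : Fin n → ℝ) (μ : ℝ) (w : Fin n → ℝ) : ℝ :=
  if h : (Finset.univ : Finset (Fin n)).Nonempty then
    Finset.univ.sup' h (fun l => Mv θ μ l * Gv l w) else 0

lemma Mv_eq {θ : Fin n → ℝ} {μ : ℝ} (hμ1 : μ < 1) (j : Fin n) :
    Mv θ μ j = μ * (1 + θ j) := by
  have : (1:ℝ) - μ ≠ 0 := by linarith
  unfold Mv tauv; rw [← mul_assoc, mul_div_cancel₀ _ this]; ring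

lemma Mv_pos {θ : Fin n → ℝ} {μ : ℝ} (hθpos : ∀ j, 0 < θ j) (hμ0 : 0 < μ) (hμ1 : μ < 1)
    (j : Fin n) : 0 < Mv θ μ j := by
  rw [Mv_eq hμ1]; have := hθpos j; positivity

lemma Mv_mono {θ : Fin n → ℝ} {μ : ℝ} (hθmono : StrictMono θ) (hμ0 : 0 < μ) (hμ1 : μ < 1) :
    Monotone (Mv θ μ) := by
  intro a b hab
  rw [Mv_eq hμ1, Mv_eq hμ1]
  have := hθmono.monotone hab
  nlinarith

lemma Mv_smono {θ : Fin n → ℝ} {μ : ℝ} (hθmono : StrictMono θ) (hμ0 : 0 < μ) (hμ1 : μ < 1) :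
    StrictMono (Mv θ μ) := by
  intro a b hab
  rw [Mv_eq hμ1, Mv_eq hμ1]
  have := hθmono hab
  nlinarith

lemma tauv_le_iff {θ : Fin n → ℝ} {μ : ℝ} (hθmono : StrictMono θ) (hμ0 : 0 < μ) (hμ1 : μ < 1)
    {l j : Fin n} : tauv θ μ l ≤ tauv θ μ j ↔ l ≤ j := by
  have hc : 0 < μ / (1 - μ) := div_pos hμ0 (by linarith)
  constructor
  · intro h
    by_contra hlj
    push_neg at hlj
    have h2 : tauv θ μ j < tauv θ μ l := mul_lt_mul_of_pos_left (hθmono hlj) hc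
    linarith
  · intro h
    rcases eq_or_lt_of_le h with rfl | h
    · exact le_refl _
    · exact le_of_lt (mul_lt_mul_of_pos_left (hθmono h) hc)

lemma Gv_nonneg {l : Fin n} {w : Fin n → ℝ} (hw : ∀ j, 0 ≤ w j) : 0 ≤ Gv l w := by
  apply Finset.sum_nonneg
  intro j _
  split
  · exact hw j
  · exact le_refl 0

lemma Gv_le_one {l : Fin n} {w : Fin n → ℝ} (hw : Dist w) : Gv l w ≤ 1 := by
  rw [← hw.2]
  apply Finset.sum_le_sum
  intro j _
  split
  · exact le_refl _
  · exact hw.1 j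

lemma Gv_eq_one {l j : Fin n} {w : Fin n → ℝ} (hw : Dist w)
    (hsupp : ∀ k, w k ≠ 0 → j ≤ k) (hl : l ≤ j) : Gv l w = 1 := by
  rw [← hw.2]
  apply Finset.sum_congr rfl
  intro k _
  split
  · rfl
  · rename_i h
    by_contra hne
    exact h (le_trans hl (hsupp k (fun h0 => hne h0.symm)))

lemma Gv_lin (l : Fin n) (a b : ℝ) (u v : Fin n → ℝ) :
    Gv l (fun j => a * u j + b * v j) = a * Gv l u + b * Gv l v := by
  unfold Gv
  rw [Finset.mul_sum, Finset.mul_sum, ← Finset.sum_add_distrib]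
  apply Finset.sum_congr rfl
  intro j _
  split <;> simp

lemma Gv_single (l j0 : Fin n) :
    Gv l (fun j => if j = j0 then (1:ℝ) else 0) = if l ≤ j0 then 1 else 0 := by
  unfold Gv
  have : ∀ j : Fin n, (if l ≤ j then (if j = j0 then (1:ℝ) else 0) else 0)
      = (if j = j0 then (if l ≤ j0 then (1:ℝ) else 0) else 0) := by
    intro j
    by_cases h : j = j0
    · subst h; simp
    · simp [h]
  rw [Finset.sum_congr rfl (fun j _ => this j), Finset.sum_ite_eq' Finset.univ j0]
  simp

lemma phiv_ge {θ : Fin n → ℝ} {μ : ℝ} (w : Fin n → ℝ) (l : Fin n) :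
    Mv θ μ l * Gv l w ≤ phiv θ μ w := by
  have h : (Finset.univ : Finset (Fin n)).Nonempty := ⟨l, mem_univ l⟩
  rw [phiv, dif_pos h]
  exact Finset.le_sup' (fun l => Mv θ μ l * Gv l w) (mem_univ l)

lemma phiv_exists {θ : Fin n → ℝ} {μ : ℝ} (hn : 0 < n) (w : Fin n → ℝ) :
    ∃ l, phiv θ μ w = Mv θ μ l * Gv l w := by
  have h : (Finset.univ : Finset (Fin n)).Nonempty := ⟨⟨0, hn⟩, mem_univ _⟩
  rw [phiv, dif_pos h]
  obtain ⟨l, _, hl⟩ := Finset.exists_mem_eq_sup' h (fun l => Mv θ μ l * Gv l w)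
  exact ⟨l, hl⟩

end S16

namespace S16

variable {n : ℕ}

lemma USone_eq {θ : Fin n → ℝ} {μ : ℝ} (hθmono : StrictMono θ) (hμ0 : 0 < μ) (hμ1 : μ < 1)
    (l : Fin n) (w : Fin n → ℝ) :
    USone n θ μ (tauv θ μ l) w = Mv θ μ l * Gv l w := by
  unfold USone Gv
  rw [Finset.mul_sum]
  apply Finset.sum_congr rfl
  intro j _
  have hiff : tauv θ μ l ≤ μ / (1 - μ) * θ j ↔ l ≤ j := tauv_le_iff hθmono hμ0 hμ1
  by_cases h : l ≤ j
  · rw [if_pos (hiff.mpr h), if_pos h]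
    show w j * 1 * (μ + (1 - μ) * tauv θ μ l) = Mv θ μ l * w j
    unfold Mv; ring
  · rw [if_neg (fun hc => h (hiff.mp hc)), if_neg h]
    ring

/-- For a `Good` distribution, `pstar` targets the lowest support point. -/
lemma good_pstar {θ : Fin n → ℝ} {μ : ℝ} {pstar : (Fin n → ℝ) → ℝ}
    (hθpos : ∀ j, 0 < θ j) (hθmono : StrictMono θ) (hμ0 : 0 < μ) (hμ1 : μ < 1)
    (hpstar : ∀ w : Fin n → ℝ, ((∀ j, 0 ≤ w j) ∧ ∑ j, w j = 1) →
      ∃ jo : Fin n, pstar w = μ / (1 - μ) * θ jo ∧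
        (∀ l : Fin n, USone n θ μ (μ / (1 - μ) * θ l) w ≤ USone n θ μ (pstar w) w) ∧
        (∀ l : Fin n, USone n θ μ (μ / (1 - μ) * θ l) w = USone n θ μ (pstar w) w →
          jo ≤ l))
    {j : Fin n} {v : Fin n → ℝ} (hv : Dist v) (hg : Good θ μ j v) :
    pstar v = tauv θ μ j ∧ USone n θ μ (pstar v) v = Mv θ μ j := by
  obtain ⟨jo, hjo, hmax, hmin⟩ := hpstar v hv
  have hGj : Gv j v = 1 := Gv_eq_one hv hg.2.1 (le_refl j)
  have hUSj : USone n θ μ (tauv θ μ j) v = Mv θ μ j := by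
    rw [USone_eq hθmono hμ0 hμ1, hGj, mul_one]
  -- j is a maximizer
  have hU : ∀ l, USone n θ μ (tauv θ μ l) v ≤ Mv θ μ j := by
    intro l
    rw [USone_eq hθmono hμ0 hμ1]
    exact hg.2.2 l
  have hjoUS : USone n θ μ (pstar v) v = Mv θ μ jo * Gv jo v := by
    rw [hjo]
    exact USone_eq hθmono hμ0 hμ1 jo v
  have h1 : USone n θ μ (pstar v) v = Mv θ μ j := by
    have hle : USone n θ μ (pstar v) v ≤ Mv θ μ j := by
      rw [hjoUS]
      have := hU jo
      rw [USone_eq hθmono hμ0 hμ1] at this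
      exact this
    have hge : Mv θ μ j ≤ USone n θ μ (pstar v) v := by
      rw [← hUSj]; exact hmax j
    linarith
  have hjole : jo ≤ j := hmin j (by rw [show μ/(1-μ)*θ j = tauv θ μ j from rfl, hUSj, h1])
  have hjoj : jo = j := by
    rcases eq_or_lt_of_le hjole with h | h
    · exact h
    · exfalso
      have hGjo : Gv jo v = 1 := Gv_eq_one hv hg.2.1 (le_of_lt h)
      have : Mv θ μ jo < Mv θ μ j := Mv_smono hθmono hμ0 hμ1 h
      rw [hjoUS, hGjo, mul_one] at h1
      linarith
  constructor
  · rw [hjo, hjoj]; rfl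
  · exact h1

/-- value of USone at pstar equals phiv for any distribution. -/
lemma US_pstar_eq_phiv {θ : Fin n → ℝ} {μ : ℝ} {pstar : (Fin n → ℝ) → ℝ}
    (hθmono : StrictMono θ) (hμ0 : 0 < μ) (hμ1 : μ < 1)
    (hpstar : ∀ w : Fin n → ℝ, ((∀ j, 0 ≤ w j) ∧ ∑ j, w j = 1) →
      ∃ jo : Fin n, pstar w = μ / (1 - μ) * θ jo ∧
        (∀ l : Fin n, USone n θ μ (μ / (1 - μ) * θ l) w ≤ USone n θ μ (pstar w) w) ∧
        (∀ l : Fin n, USone n θ μ (μ / (1 - μ) * θ l) w = USone n θ μ (pstar w) w →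
          jo ≤ l))
    {w : Fin n → ℝ} (hw : Dist w) :
    USone n θ μ (pstar w) w = phiv θ μ w := by
  obtain ⟨jo, hjo, hmax, _⟩ := hpstar w hw
  have hjoUS : USone n θ μ (pstar w) w = Mv θ μ jo * Gv jo w := by
    rw [hjo]; exact USone_eq hθmono hμ0 hμ1 jo w
  apply le_antisymm
  · rw [hjoUS]; exact phiv_ge w jo
  · have hn : 0 < n := jo.pos  -- jo : Fin n gives n > 0
    obtain ⟨l, hl⟩ := phiv_exists (θ := θ) (μ := μ) hn w
    rw [hl, ← USone_eq hθmono hμ0 hμ1]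
    exact hmax l

end S16

namespace S16
variable {n : ℕ} {X : Type*}

lemma lsum_add (L : List X) (f g : X → ℝ) :
    (L.map (fun x => f x + g x)).sum = (L.map f).sum + (L.map g).sum := by
  induction L with
  | nil => simp
  | cons a t ih => simp [ih]; ring

lemma lsum_mul (L : List X) (a : ℝ) (f : X → ℝ) :
    (L.map (fun x => a * f x)).sum = a * (L.map f).sum := by
  induction L with
  | nil => simp
  | cons b t ih => simp [ih]; ring

lemma lsum_le (L : List X) (f g : X → ℝ) (h : ∀ x ∈ L, f x ≤ g x) :
    (L.map f).sum ≤ (L.map g).sum := by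
  induction L with
  | nil => simp
  | cons a t ih =>
      simp only [List.map_cons, List.sum_cons]
      have := h a (by simp)
      have := ih (fun x hx => h x (by simp [hx]))
      linarith

lemma lsum_fin (L : List X) (g : X → ℝ) :
    ∑ i : Fin L.length, g (L.get i) = (L.map g).sum := by
  induction L with
  | nil => simp
  | cons a t ih =>
      rw [List.map_cons, List.sum_cons, ← ih]
      exact Fin.sum_univ_succ (fun i : Fin (t.length + 1) => g ((a :: t).get i))

lemma lsum_swap (L : List X) (h : X → Fin n → ℝ) :
    (L.map (fun x => ∑ j, h x j)).sum = ∑ j, (L.map (fun x => h x j)).sum := by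
  induction L with
  | nil => simp
  | cons a t ih => simp [ih, Finset.sum_add_distrib]

end S16

namespace S16
variable {n : ℕ}

set_option maxHeartbeats 1000000 in
lemma decomp {θ : Fin n → ℝ} {μ : ℝ} (hθpos : ∀ j, 0 < θ j) (hθmono : StrictMono θ)
    (hμ0 : 0 < μ) (hμ1 : μ < 1) (N : ℕ) :
    ∀ w : Fin n → ℝ, Dist w → ((Finset.univ.filter (fun j => w j ≠ 0)).card ≤ N) →
    ∃ L : List (ℝ × Fin n × (Fin n → ℝ)),
      (∀ p ∈ L, 0 ≤ p.1 ∧ Dist p.2.2 ∧ (∀ j, w j = 0 → p.2.2 j = 0) ∧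
        Good θ μ p.2.1 p.2.2) ∧
      (L.map (fun p => p.1)).sum = 1 ∧
      (∀ j, (L.map (fun p => p.1 * p.2.2 j)).sum = w j) ∧
      (L.map (fun p => p.1 * Mv θ μ p.2.1)).sum = phiv θ μ w := by
  induction N with
  | zero =>
      intro w hw hcard
      exfalso
      have h1 : (∑ j, w j) ≠ 0 := by rw [hw.2]; norm_num
      obtain ⟨j, _, hj⟩ := Finset.exists_ne_zero_of_sum_ne_zero h1
      have : j ∈ Finset.univ.filter (fun j => w j ≠ 0) := by simp [hj]
      have := Finset.card_pos.mpr ⟨j, this⟩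
      omega
  | succ N ih =>
      intro w hw hcard
      have hM0pos' := Mv_pos hθpos hμ0 hμ1
      -- support is nonempty
      have h1 : (∑ j, w j) ≠ 0 := by rw [hw.2]; norm_num
      obtain ⟨j', _, hj'⟩ := Finset.exists_ne_zero_of_sum_ne_zero h1
      have hS : (Finset.univ.filter (fun j => w j ≠ 0)).Nonempty := ⟨j', by simp [hj']⟩
      set j0 := (Finset.univ.filter (fun j => w j ≠ 0)).min' hS with hj0def
      have hj0mem : j0 ∈ Finset.univ.filter (fun j => w j ≠ 0) := Finset.min'_mem _ hS
      have hw0ne : w j0 ≠ 0 := by simpa using hj0mem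
      have hw0pos : 0 < w j0 := lt_of_le_of_ne (hw.1 j0) (Ne.symm hw0ne)
      have hmin : ∀ k, w k ≠ 0 → j0 ≤ k := by
        intro k hk
        exact Finset.min'_le _ _ (by simp [hk])
      have hw0le : w j0 ≤ 1 := by
        rw [← hw.2]
        exact Finset.single_le_sum (fun j _ => hw.1 j) (Finset.mem_univ j0)
      set M0 := Mv θ μ j0 with hM0def
      have hM0 : 0 < M0 := hM0pos' j0
      by_cases h1' : w j0 = 1
      · -- w is a point mass at j0
        have hzero : ∀ j, j ≠ j0 → w j = 0 := by
          intro j hj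
          have hsum : ∑ k ∈ Finset.univ.erase j0, w k = 0 := by
            have h := Finset.add_sum_erase Finset.univ w (Finset.mem_univ j0)
            rw [hw.2, h1'] at h
            linarith
          have := (Finset.sum_eq_zero_iff_of_nonneg
            (fun k _ => hw.1 k)).mp hsum j (by simp [hj])
          exact this
        have hGle : ∀ l, Mv θ μ l * Gv l w ≤ M0 := by
          intro l
          by_cases hl : l ≤ j0
          · have hG1 : Gv l w = 1 := Gv_eq_one hw hmin hl
            rw [hG1, mul_one]
            exact Mv_mono hθmono hμ0 hμ1 hl
          · have hG0 : Gv l w = 0 := by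
              apply Finset.sum_eq_zero
              intro j _
              split
              · rename_i hlj
                exact hzero j (fun hjj => hl (hjj ▸ hlj))
              · rfl
            rw [hG0, mul_zero]
            exact le_of_lt hM0
        have hGj0 : Gv j0 w = 1 := Gv_eq_one hw hmin (le_refl j0)
        have hphi : phiv θ μ w = M0 := by
          apply le_antisymm
          · obtain ⟨l, hl⟩ := phiv_exists (θ := θ) (μ := μ) j0.pos w
            rw [hl]; exact hGle l
          · have := phiv_ge (θ := θ) (μ := μ) w j0
            rw [hGj0, mul_one] at this
            exact this
        refine ⟨[(1, j0, w)], ?_, by simp, by intro j; simp, by simp [hphi, hM0def]⟩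
        intro p hp
        simp only [List.mem_singleton] at hp
        subst hp
        exact ⟨by norm_num, hw, fun j hj => hj, hw0pos, hmin, hGle⟩
      · -- main splitting case
        set c := 1 - w j0 with hcdef
        have hc : 0 < c := by
          rcases lt_or_eq_of_le hw0le with h | h
          · simp [hcdef]; linarith
          · exact absurd h h1'
        set B := fun j => (if j = j0 then 0 else w j) / c with hBdef
        have hB0 : B j0 = 0 := by simp [hBdef]
        have hBnn : ∀ j, 0 ≤ B j := by
          intro j
          apply div_nonneg _ (le_of_lt hc)
          split
          · exact le_refl 0
          · exact hw.1 j
        have hitesum : ∑ j, (if j = j0 then (0:ℝ) else w j) = c := by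
          have h2 : ∀ j : Fin n, (if j = j0 then (0:ℝ) else w j)
              = w j - (if j = j0 then w j else 0) := by
            intro j; split <;> simp
          rw [Finset.sum_congr rfl (fun j _ => h2 j), Finset.sum_sub_distrib, hw.2,
            Finset.sum_ite_eq' Finset.univ j0 w]
          simp [hcdef]
        have hBsum : ∑ j, B j = 1 := by
          rw [hBdef, ← Finset.sum_div, hitesum, div_self (ne_of_gt hc)]
        have hBdist : Dist B := ⟨hBnn, hBsum⟩
        have hwB : ∀ j, w j = 0 → B j = 0 := by
          intro j hj; simp [hBdef, hj]
        have hBsupp : ∀ j, B j ≠ 0 → j0 ≤ j := by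
          intro j hj
          apply hmin
          intro hwj
          exact hj (hwB j hwj)
        have hBne : ∀ j, B j ≠ 0 ↔ (j ≠ j0 ∧ w j ≠ 0) := by
          intro j
          constructor
          · intro hj
            constructor
            · intro hjj; exact hj (hjj ▸ hB0)
            · intro hwj; exact hj (hwB j hwj)
          · intro ⟨hjj, hwj⟩
            simp [hBdef, hjj, hwj, ne_of_gt hc]
        have hcard' : (Finset.univ.filter (fun j => B j ≠ 0)).card ≤ N := by
          have heq : Finset.univ.filter (fun j => B j ≠ 0)
              = (Finset.univ.filter (fun j => w j ≠ 0)).erase j0 := by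
            ext j
            simp [hBne j, and_comm]
          rw [heq, Finset.card_erase_of_mem hj0mem]
          omega
        obtain ⟨LB, hLBmem, hLBw, hLBmass, hLBUS⟩ := ih B hBdist hcard'
        set φB := phiv θ μ B with hφBdef
        have hGj0B : Gv j0 B = 1 := Gv_eq_one hBdist hBsupp (le_refl j0)
        have hφB_ge : M0 ≤ φB := by
          have := phiv_ge (θ := θ) (μ := μ) B j0
          rw [hGj0B, mul_one] at this
          exact this
        have hφBpos : 0 < φB := lt_of_lt_of_le hM0 hφB_ge
        have hjp : ∀ p ∈ LB, j0 < p.2.1 := by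
          intro p hp
          obtain ⟨_, hD, hsu, hG⟩ := hLBmem p hp
          have hv : p.2.2 p.2.1 ≠ 0 := ne_of_gt hG.1
          have hBj : B p.2.1 ≠ 0 := by
            intro h0
            exact hv (hsu _ h0)
          have := (hBne _).mp hBj
          exact lt_of_le_of_ne (hBsupp _ hBj) (Ne.symm this.1)
        have hMpgt : ∀ p ∈ LB, M0 < Mv θ μ p.2.1 := by
          intro p hp
          exact Mv_smono hθmono hμ0 hμ1 (hjp p hp)
        set Dmax := c * (φB - M0) / M0 with hDmaxdef
        have hDmax_nonneg : 0 ≤ Dmax := by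
          apply div_nonneg _ (le_of_lt hM0)
          apply mul_nonneg (le_of_lt hc)
          linarith
        set s := if c * φB ≤ M0 then (1:ℝ) else w j0 / Dmax with hsdef
        have hcle1 : c ≤ 1 := by simp [hcdef]; linarith
        have hs_cases : (c * φB ≤ M0 ∧ s = 1) ∨ (M0 < c * φB ∧ s = w j0 / Dmax) := by
          by_cases h : c * φB ≤ M0
          · left; exact ⟨h, by simp [hsdef, h]⟩
          · right; exact ⟨lt_of_not_ge h, by simp [hsdef, h]⟩
        have hDmax_pos_of : M0 < c * φB → 0 < Dmax := by
          intro h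
          rw [hDmaxdef]
          apply div_pos _ hM0
          nlinarith
        have hs0 : 0 ≤ s := by
          rcases hs_cases with ⟨_, hs⟩ | ⟨h, hs⟩
          · rw [hs]; norm_num
          · rw [hs]
            exact div_nonneg (le_of_lt hw0pos) (le_of_lt (hDmax_pos_of h))
        have hs1 : s ≤ 1 := by
          rcases hs_cases with ⟨_, hs⟩ | ⟨h, hs⟩
          · rw [hs]
          · rw [hs]
            rw [div_le_one (hDmax_pos_of h)]
            rw [hDmaxdef]
            rw [le_div_iff₀ hM0]
            nlinarith
        have hsDmax : s * Dmax ≤ w j0 := by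
          rcases hs_cases with ⟨h, hs⟩ | ⟨h, hs⟩
          · rw [hs, one_mul, hDmaxdef, div_le_iff₀ hM0]
            nlinarith
          · rw [hs, div_mul_cancel₀]
            exact ne_of_gt (hDmax_pos_of h)
        set e := fun j : Fin n => if j = j0 then (1:ℝ) else 0 with hedef
        have hedist : Dist e := by
          constructor
          · intro j; simp only [hedef]; split <;> norm_num
          · simp [hedef]
        have hw_eq : ∀ j, w j = c * B j + w j0 * e j := by
          intro j
          by_cases hj : j = j0
          · subst hj; simp [hBdef, hedef]
          · simp [hBdef, hedef, hj]
            rw [mul_div_cancel₀]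
            exact ne_of_gt hc
        set lam := fun p : ℝ × Fin n × (Fin n → ℝ) =>
          (Mv θ μ p.2.1 - M0) / Mv θ μ p.2.1 with hlamdef
        have hlam_pos : ∀ p ∈ LB, 0 < lam p := by
          intro p hp
          apply div_pos _ (hM0pos' p.2.1)
          have := hMpgt p hp; linarith
        have hlam_lt : ∀ p : ℝ × Fin n × (Fin n → ℝ), lam p < 1 := by
          intro p
          rw [hlamdef, div_lt_one (hM0pos' p.2.1)]
          linarith [hM0]
        have hlam_nonneg : ∀ p ∈ LB, 0 ≤ lam p := fun p hp => le_of_lt (hlam_pos p hp)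
        have homl : ∀ p : ℝ × Fin n × (Fin n → ℝ),
            (1 - lam p) * Mv θ μ p.2.1 = M0 := by
          intro p
          have ha := ne_of_gt (hM0pos' p.2.1)
          rw [hlamdef]
          field_simp
          ring
        set mix := fun p : ℝ × Fin n × (Fin n → ℝ) =>
          fun j => lam p * e j + (1 - lam p) * p.2.2 j with hmixdef
        set F1 := fun p : ℝ × Fin n × (Fin n → ℝ) =>
          ((s * c * p.1 * Mv θ μ p.2.1 / M0, (j0, mix p)) : ℝ × Fin n × (Fin n → ℝ))
          with hF1def
        set F2 := fun p : ℝ × Fin n × (Fin n → ℝ) =>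
          (((1 - s) * c * p.1, p.2) : ℝ × Fin n × (Fin n → ℝ)) with hF2def
        refine ⟨LB.map F1 ++ LB.map F2 ++ [(w j0 - s * Dmax, (j0, e))], ?_, ?_, ?_, ?_⟩
        · -- membership properties
          intro q hq
          simp only [List.mem_append, List.mem_map, List.mem_singleton] at hq
          rcases hq with (⟨p, hp, rfl⟩ | ⟨p, hp, rfl⟩) | rfl
          · -- F1 p
            obtain ⟨hβ, hDv, hsu, hG⟩ := hLBmem p hp
            have hl0 := hlam_pos p hp
            have hl1 := hlam_lt p
            have hvj0 : p.2.2 j0 = 0 := hsu j0 hB0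
            refine ⟨?_, ⟨?_, ?_⟩, ?_, ?_, ?_, ?_⟩
            · show 0 ≤ s * c * p.1 * Mv θ μ p.2.1 / M0
              have := hM0pos' p.2.1
              positivity
            · intro j
              show 0 ≤ lam p * e j + (1 - lam p) * p.2.2 j
              have he0 := hedist.1 j
              have hv0 := hDv.1 j
              nlinarith
            · show ∑ j, (lam p * e j + (1 - lam p) * p.2.2 j) = 1
              rw [Finset.sum_add_distrib, ← Finset.mul_sum, ← Finset.mul_sum,
                hedist.2, hDv.2]
              ring
            · intro j hj
              show lam p * e j + (1 - lam p) * p.2.2 j = 0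
              have hjne : j ≠ j0 := fun hjj => hw0ne (hjj ▸ hj)
              have he0 : e j = 0 := by simp [hedef, hjne]
              have hv0 : p.2.2 j = 0 := hsu j (hwB j hj)
              rw [he0, hv0]; ring
            · show 0 < lam p * e j0 + (1 - lam p) * p.2.2 j0
              rw [hvj0]
              simp [hedef]
              exact hl0
            · intro k hk
              show j0 ≤ k
              by_contra hlt
              push_neg at hlt
              have hek : e k = 0 := by
                simp [hedef]
                intro hkk
                exact absurd (hkk ▸ hlt) (lt_irrefl j0)
              have hvk : p.2.2 k = 0 := by
                by_contra hv
                exact absurd (le_trans (le_of_lt (hjp p hp)) (hG.2.1 k hv))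
                  (not_le.mpr hlt)
              exact hk (by show lam p * e k + (1 - lam p) * p.2.2 k = 0
                           rw [hek, hvk]; ring)
            · intro l
              show Mv θ μ l * Gv l (mix p) ≤ M0
              have hGlin : Gv l (mix p) = lam p * Gv l e + (1 - lam p) * Gv l p.2.2 :=
                Gv_lin l (lam p) (1 - lam p) e p.2.2
              rw [hGlin]
              have hGe : Gv l e = if l ≤ j0 then 1 else 0 := by
                rw [hedef]; exact Gv_single l j0
              by_cases hl : l ≤ j0
              · have hge1 : Gv l e = 1 := by rw [hGe, if_pos hl]
                have hgv1 : Gv l p.2.2 ≤ 1 := Gv_le_one hDv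
                have hgv0 : 0 ≤ Gv l p.2.2 := Gv_nonneg hDv.1
                have hMl : Mv θ μ l ≤ M0 := Mv_mono hθmono hμ0 hμ1 hl
                have hMlpos := hM0pos' l
                rw [hge1]
                have hin1 : lam p * 1 + (1 - lam p) * Gv l p.2.2 ≤ 1 := by nlinarith
                have hin0 : 0 ≤ lam p * 1 + (1 - lam p) * Gv l p.2.2 := by nlinarith
                nlinarith [mul_le_mul hMl hin1 hin0 (le_of_lt hM0)]
              · have hge0 : Gv l e = 0 := by rw [hGe, if_neg hl]
                rw [hge0, mul_zero, zero_add, ← mul_assoc, mul_comm (Mv θ μ l) (1 - lam p),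
                  mul_assoc]
                calc (1 - lam p) * (Mv θ μ l * Gv l p.2.2)
                    ≤ (1 - lam p) * Mv θ μ p.2.1 := by
                      apply mul_le_mul_of_nonneg_left (hG.2.2 l)
                      linarith
                  _ = M0 := homl p
          · -- F2 p
            obtain ⟨hβ, hDv, hsu, hG⟩ := hLBmem p hp
            refine ⟨?_, hDv, ?_, hG⟩
            · show 0 ≤ (1 - s) * c * p.1
              have : 0 ≤ 1 - s := by linarith
              positivity
            · intro j hj
              exact hsu j (hwB j hj)
          · -- point mass at j0
            refine ⟨?_, hedist, ?_, ?_, ?_, ?_⟩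
            · show 0 ≤ w j0 - s * Dmax
              linarith
            · intro j hj
              have hjne : j ≠ j0 := fun hjj => hw0ne (hjj ▸ hj)
              simp [hedef, hjne]
            · show (0:ℝ) < e j0
              simp [hedef]
            · intro k hk
              by_contra hlt
              push_neg at hlt
              have : e k = 0 := by
                simp [hedef]
                intro hkk
                exact absurd (hkk ▸ hlt) (lt_irrefl j0)
              exact hk this
            · intro l
              have hGe : Gv l e = if l ≤ j0 then 1 else 0 := by
                rw [hedef]; exact Gv_single l j0
              show Mv θ μ l * Gv l e ≤ M0
              rw [hGe]
              by_cases hl : l ≤ j0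
              · simp only [if_pos hl, mul_one]
                exact Mv_mono hθmono hμ0 hμ1 hl
              · simp only [if_neg hl, mul_zero]
                exact le_of_lt hM0
        · -- total weight = 1
          rw [List.map_append, List.map_append, List.sum_append, List.sum_append,
            List.map_map, List.map_map]
          have hcomp1 : ((fun p : ℝ × Fin n × (Fin n → ℝ) => p.1) ∘ F1)
              = fun p => (s * c / M0) * (p.1 * Mv θ μ p.2.1) := by
            funext p
            show s * c * p.1 * Mv θ μ p.2.1 / M0 = s * c / M0 * (p.1 * Mv θ μ p.2.1)
            ring
          have hcomp2 : ((fun p : ℝ × Fin n × (Fin n → ℝ) => p.1) ∘ F2)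
              = fun p => ((1 - s) * c) * p.1 := by
            funext p; rfl
          rw [hcomp1, hcomp2, lsum_mul, lsum_mul, hLBUS, hLBw]
          simp only [List.map_singleton, List.sum_singleton]
          rw [hDmaxdef]
          field_simp
          ring
        · -- mass at each j
          intro j
          rw [List.map_append, List.map_append, List.sum_append, List.sum_append,
            List.map_map, List.map_map]
          have hcomp1 : ((fun p : ℝ × Fin n × (Fin n → ℝ) => p.1 * p.2.2 j) ∘ F1)
              = fun p => (s * c * e j / M0) * (p.1 * Mv θ μ p.2.1) +
                  ((-(s * c) * e j) * p.1 + (s * c) * (p.1 * p.2.2 j)) := by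
            funext p
            show s * c * p.1 * Mv θ μ p.2.1 / M0 * (lam p * e j + (1 - lam p) * p.2.2 j) = _
            have hMne := ne_of_gt (hM0pos' p.2.1)
            have h1 : Mv θ μ p.2.1 * lam p = Mv θ μ p.2.1 - M0 := by
              rw [hlamdef, mul_comm, div_mul_cancel₀ _ hMne]
            have h2 : Mv θ μ p.2.1 * (1 - lam p) = M0 := by
              rw [mul_comm]; exact homl p
            have hinv : M0 * M0⁻¹ = 1 := mul_inv_cancel₀ (ne_of_gt hM0)
            linear_combination (s * c * p.1 * e j / M0) * h1 + (s * c * p.1 * p.2.2 j / M0) * h2 + (s * c * p.1 * p.2.2 j - s * c * p.1 * e j) * hinv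
          have hcomp2 : ((fun p : ℝ × Fin n × (Fin n → ℝ) => p.1 * p.2.2 j) ∘ F2)
              = fun p => ((1 - s) * c) * (p.1 * p.2.2 j) := by
            funext p
            show (1 - s) * c * p.1 * p.2.2 j = _
            ring
          rw [hcomp1, hcomp2, lsum_add, lsum_mul, lsum_add, lsum_mul, lsum_mul, lsum_mul,
            hLBUS, hLBw, hLBmass j]
          simp only [List.map_singleton, List.sum_singleton]
          have hfin : s * c * e j / M0 * φB + (-(s * c) * e j * 1 + s * c * B j)
              + (1 - s) * c * B j + (w j0 - s * Dmax) * e j = c * B j + w j0 * e j := by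
            rw [hDmaxdef]
            field_simp
            ring
          rw [hfin, ← hw_eq j]
        · -- US value
          rw [List.map_append, List.map_append, List.sum_append, List.sum_append,
            List.map_map, List.map_map]
          have hcomp1 : ((fun p : ℝ × Fin n × (Fin n → ℝ) => p.1 * Mv θ μ p.2.1) ∘ F1)
              = fun p => (s * c) * (p.1 * Mv θ μ p.2.1) := by
            funext p
            show s * c * p.1 * Mv θ μ p.2.1 / M0 * Mv θ μ j0 = _
            rw [← hM0def]
            field_simp
          have hcomp2 : ((fun p : ℝ × Fin n × (Fin n → ℝ) => p.1 * Mv θ μ p.2.1) ∘ F2)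
              = fun p => ((1 - s) * c) * (p.1 * Mv θ μ p.2.1) := by
            funext p
            show (1 - s) * c * p.1 * Mv θ μ p.2.1 = _
            ring
          rw [hcomp1, hcomp2, lsum_mul, lsum_mul, hLBUS]
          simp only [List.map_singleton, List.sum_singleton]
          rw [← hM0def]
          -- structure of Gv l w
          have hGvw : ∀ l, Gv l w = c * Gv l B + w j0 * (if l ≤ j0 then 1 else 0) := by
            intro l
            have : Gv l w = Gv l (fun j => c * B j + w j0 * e j) := by
              unfold Gv
              exact Finset.sum_congr rfl (fun j _ => by rw [hw_eq j])
            rw [this, Gv_lin, Gv_single]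
          have hGvB1 : ∀ l, l ≤ j0 → Gv l B = 1 := fun l hl => Gv_eq_one hBdist hBsupp hl
          rcases hs_cases with ⟨hca, hs⟩ | ⟨hcb, hs⟩
          · -- case A : phiv w = M0
            have hphiw : phiv θ μ w = M0 := by
              apply le_antisymm
              · obtain ⟨l, hl⟩ := phiv_exists (θ := θ) (μ := μ) j0.pos w
                rw [hl, hGvw l]
                by_cases hlj : l ≤ j0
                · rw [hGvB1 l hlj, if_pos hlj]
                  have hc1 : c * 1 + w j0 * 1 = 1 := by rw [hcdef]; ring
                  rw [hc1, mul_one]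
                  exact Mv_mono hθmono hμ0 hμ1 hlj
                · rw [if_neg hlj, mul_zero, add_zero, ← mul_assoc,
                    mul_comm (Mv θ μ l) c, mul_assoc]
                  calc c * (Mv θ μ l * Gv l B) ≤ c * φB := by
                        apply mul_le_mul_of_nonneg_left (phiv_ge B l) (le_of_lt hc)
                    _ ≤ M0 := hca
              · have h := phiv_ge (θ := θ) (μ := μ) w j0
                rw [hGvw j0, hGvB1 j0 (le_refl j0), if_pos (le_refl j0)] at h
                rw [show c * 1 + w j0 * 1 = 1 by rw [hcdef]; ring, mul_one] at h
                exact h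
            rw [hphiw, hs]
            rw [hDmaxdef]
            field_simp
            ring
          · -- case B : phiv w = c * φB
            have hDpos := hDmax_pos_of hcb
            have hphiw : phiv θ μ w = c * φB := by
              apply le_antisymm
              · obtain ⟨l, hl⟩ := phiv_exists (θ := θ) (μ := μ) j0.pos w
                rw [hl, hGvw l]
                by_cases hlj : l ≤ j0
                · rw [hGvB1 l hlj, if_pos hlj]
                  rw [show c * 1 + w j0 * 1 = 1 by rw [hcdef]; ring, mul_one]
                  calc Mv θ μ l ≤ M0 := Mv_mono hθmono hμ0 hμ1 hlj
                    _ ≤ c * φB := le_of_lt hcb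
                · rw [if_neg hlj, mul_zero, add_zero, ← mul_assoc,
                    mul_comm (Mv θ μ l) c, mul_assoc]
                  apply mul_le_mul_of_nonneg_left (phiv_ge B l) (le_of_lt hc)
              · obtain ⟨l, hl⟩ := phiv_exists (θ := θ) (μ := μ) j0.pos B
                by_cases hlj : l ≤ j0
                · exfalso
                  rw [hGvB1 l hlj, mul_one] at hl
                  have h2 : φB ≤ M0 := by
                    rw [hφBdef, hl]; exact Mv_mono hθmono hμ0 hμ1 hlj
                  nlinarith
                · have h2 := phiv_ge (θ := θ) (μ := μ) w l
                  rw [hGvw l, if_neg hlj, mul_zero, add_zero, ← mul_assoc,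
                    mul_comm (Mv θ μ l) c, mul_assoc, ← hl] at h2
                  exact h2
            rw [hphiw, hs]
            have : w j0 / Dmax * Dmax = w j0 := div_mul_cancel₀ _ (ne_of_gt hDpos)
            rw [this]
            ring
end S16

namespace S16
variable {n : ℕ}

noncomputable def UPone (n : ℕ) (θ : Fin n → ℝ) (μ : ℝ) (pstar : (Fin n → ℝ) → ℝ)
    (w : Fin n → ℝ) : ℝ :=
  ∑ j, w j * (if pstar w ≤ μ / (1 - μ) * θ j then (1 : ℝ) else 0) *
    (μ * θ j - (1 - μ) * pstar w)

lemma omu_tauv {θ : Fin n → ℝ} {μ : ℝ} (hμ1 : μ < 1) (j : Fin n) :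
    (1 - μ) * tauv θ μ j = μ * θ j := by
  have : (1:ℝ) - μ ≠ 0 := by linarith
  unfold tauv; rw [← mul_assoc, mul_div_cancel₀ _ this]

lemma UPone_good {θ : Fin n → ℝ} {μ : ℝ} {pstar : (Fin n → ℝ) → ℝ}
    (hθpos : ∀ j, 0 < θ j) (hθmono : StrictMono θ) (hμ0 : 0 < μ) (hμ1 : μ < 1)
    (hpstar : ∀ w : Fin n → ℝ, ((∀ j, 0 ≤ w j) ∧ ∑ j, w j = 1) →
      ∃ jo : Fin n, pstar w = μ / (1 - μ) * θ jo ∧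
        (∀ l : Fin n, USone n θ μ (μ / (1 - μ) * θ l) w ≤ USone n θ μ (pstar w) w) ∧
        (∀ l : Fin n, USone n θ μ (μ / (1 - μ) * θ l) w = USone n θ μ (pstar w) w →
          jo ≤ l))
    {j : Fin n} {v : Fin n → ℝ} (hv : Dist v) (hg : Good θ μ j v) :
    UPone n θ μ pstar v = μ * (∑ k, v k * θ k) + μ - Mv θ μ j := by
  obtain ⟨hps, _⟩ := good_pstar hθpos hθmono hμ0 hμ1 hpstar hv hg
  have hterm : ∀ k : Fin n, v k * (if pstar v ≤ μ / (1 - μ) * θ k then (1:ℝ) else 0) *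
      (μ * θ k - (1 - μ) * pstar v) = μ * (v k * θ k) - μ * θ j * v k := by
    intro k
    rw [hps, show μ / (1 - μ) * θ k = tauv θ μ k from rfl]
    by_cases hk : j ≤ k
    · rw [if_pos (((tauv_le_iff hθmono hμ0 hμ1).mpr hk : tauv θ μ j ≤ tauv θ μ k))]
      rw [show (1 - μ) * tauv θ μ j = μ * θ j from omu_tauv hμ1 j]
      ring
    · have hvk : v k = 0 := by
        by_contra hv0
        exact hk (hg.2.1 k hv0)
      rw [hvk]; ring
  unfold UPone
  rw [Finset.sum_congr rfl (fun k _ => hterm k), Finset.sum_sub_distrib,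
    ← Finset.mul_sum, ← Finset.mul_sum, hv.2, Mv_eq hμ1]
  ring

lemma UPone_le {θ : Fin n → ℝ} {μ : ℝ} {pstar : (Fin n → ℝ) → ℝ}
    (hθpos : ∀ j, 0 < θ j) (hθmono : StrictMono θ) (hμ0 : 0 < μ) (hμ1 : μ < 1)
    (hpstar : ∀ w : Fin n → ℝ, ((∀ j, 0 ≤ w j) ∧ ∑ j, w j = 1) →
      ∃ jo : Fin n, pstar w = μ / (1 - μ) * θ jo ∧
        (∀ l : Fin n, USone n θ μ (μ / (1 - μ) * θ l) w ≤ USone n θ μ (pstar w) w) ∧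
        (∀ l : Fin n, USone n θ μ (μ / (1 - μ) * θ l) w = USone n θ μ (pstar w) w →
          jo ≤ l))
    {w : Fin n → ℝ} (hw : Dist w) :
    UPone n θ μ pstar w ≤ μ * (∑ k, w k * θ k) + μ - USone n θ μ (pstar w) w := by
  obtain ⟨jo, hjo, _, _⟩ := hpstar w hw
  have hUS : USone n θ μ (pstar w) w = Mv θ μ jo * Gv jo w := by
    rw [hjo]; exact USone_eq hθmono hμ0 hμ1 jo w
  have hterm : ∀ k : Fin n, w k * (if pstar w ≤ μ / (1 - μ) * θ k then (1:ℝ) else 0) *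
      (μ * θ k - (1 - μ) * pstar w)
      = μ * (if jo ≤ k then w k * θ k else 0) - μ * θ jo * (if jo ≤ k then w k else 0) := by
    intro k
    rw [hjo, show μ / (1 - μ) * θ k = tauv θ μ k from rfl,
      show μ / (1 - μ) * θ jo = tauv θ μ jo from rfl]
    by_cases hk : jo ≤ k
    · rw [if_pos (((tauv_le_iff hθmono hμ0 hμ1).mpr hk : tauv θ μ jo ≤ tauv θ μ k)),
        if_pos hk, if_pos hk]
      rw [show (1 - μ) * tauv θ μ jo = μ * θ jo from omu_tauv hμ1 jo]
      ring
    · rw [if_neg (fun hc => hk ((tauv_le_iff hθmono hμ0 hμ1).mp hc)),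
        if_neg hk, if_neg hk]
      ring
  have hUP : UPone n θ μ pstar w
      = μ * (∑ k, if jo ≤ k then w k * θ k else 0) - μ * θ jo * Gv jo w := by
    unfold UPone Gv
    rw [Finset.sum_congr rfl (fun k _ => hterm k), Finset.sum_sub_distrib,
      ← Finset.mul_sum, ← Finset.mul_sum]
  have hAle : (∑ k, if jo ≤ k then w k * θ k else 0) ≤ ∑ k, w k * θ k := by
    apply Finset.sum_le_sum
    intro k _
    split
    · exact le_refl _
    · exact mul_nonneg (hw.1 k) (le_of_lt (hθpos k))
  have hGle : Gv jo w ≤ 1 := Gv_le_one hw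
  rw [hUP, hUS, Mv_eq hμ1]
  have hθjo := hθpos jo
  nlinarith [Gv_nonneg (l := jo) hw.1]
end S16

namespace S16
variable {n : ℕ}

lemma lsum_bind {A X : Type*} (l : List A) (f : A → List X) (g : X → ℝ) :
    ((l.flatMap f).map g).sum = (l.map (fun a => ((f a).map g).sum)).sum := by
  induction l with
  | nil => simp
  | cons a t ih => simp [ih]

lemma lsum_finRange : ∀ {m : ℕ} (h : Fin m → ℝ),
    ((List.finRange m).map h).sum = ∑ i, h i := by
  intro m
  induction m with
  | zero => intro h; simp
  | succ k ih =>
      intro h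
      rw [List.finRange_succ, List.map_cons, List.sum_cons, List.map_map, ih,
        Fin.sum_univ_succ]
      rfl
end S16


set_option maxHeartbeats 1000000 in
/-- If an optimal incentive-compatible policy exists, then there is an optimal
incentive-compatible policy that is lowest-type-targeting, with the same truthful posterior,
truthful weight, sender truthful utility (hence incentive-compatibility) and platform
utility as the given optimal policy. -/
theorem stmt16 (n : ℕ) (θ : Fin n → ℝ) (μ δ ubar : ℝ) (xstar : Fin n → ℝ)
    (pstar : (Fin n → ℝ) → ℝ)
    (hθpos : ∀ j, 0 < θ j) (hθmono : StrictMono θ) (hμ0 : 0 < μ) (hμ1 : μ < 1)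
    (hδ0 : 0 < δ) (hδ1 : δ < 1)
    (hτ : ∀ j, μ / (1 - μ) * θ j ≤ 1)
    (hxstar : ∀ j, 0 ≤ xstar j) (hxstar1 : ∑ j, xstar j = 1)
    (hpstar : ∀ w : Fin n → ℝ, ((∀ j, 0 ≤ w j) ∧ ∑ j, w j = 1) →
      ∃ jo : Fin n, pstar w = μ / (1 - μ) * θ jo ∧
        (∀ l : Fin n, USone n θ μ (μ / (1 - μ) * θ l) w ≤ USone n θ μ (pstar w) w) ∧
        (∀ l : Fin n, USone n θ μ (μ / (1 - μ) * θ l) w = USone n θ μ (pstar w) w →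
          jo ≤ l))
    (σ₀ : Policy n) (hσ₀BP : BP n xstar σ₀) (hσ₀IC : ICpol n θ μ δ ubar pstar σ₀)
    (hσ₀opt : ∀ σ' : Policy n, BP n xstar σ' → ICpol n θ μ δ ubar pstar σ' →
      UPpol n θ μ pstar σ' ≤ UPpol n θ μ pstar σ₀) :
    ∃ σ : Policy n, BP n xstar σ ∧ ICpol n θ μ δ ubar pstar σ ∧
      LTT n θ μ pstar σ ∧
      σ.xT = σ₀.xT ∧ σ.alphaT = σ₀.alphaT ∧
      USpol n θ μ pstar σ = USpol n θ μ pstar σ₀ ∧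
      UPpol n θ μ pstar σ = UPpol n θ μ pstar σ₀ ∧
      (∀ σ' : Policy n, BP n xstar σ' → ICpol n θ μ δ ubar pstar σ' →
        UPpol n θ μ pstar σ' ≤ UPpol n θ μ pstar σ) := by
  classical
  obtain ⟨hαT0, hα0, hsum0, hxT0, hxT1, hx0, hx1, hmarg⟩ := hσ₀BP
  -- decompose each non-truthful posterior
  choose L hLmem hLwt hLmass hLUS using fun i : Fin σ₀.m =>
    S16.decomp hθpos hθmono hμ0 hμ1 n (σ₀.x i) ⟨hx0 i, hx1 i⟩
      (le_trans (Finset.card_filter_le _ _) (by simp))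
  set FL := (List.finRange σ₀.m).flatMap
    (fun i => (L i).map (fun p => ((σ₀.alpha i * p.1, p.2) : ℝ × Fin n × (Fin n → ℝ))))
    with hFLdef
  set σ : Policy n :=
    ⟨FL.length, σ₀.alphaT, fun t => (FL.get t).1, σ₀.xT, fun t => (FL.get t).2.2⟩
    with hσdef
  have hFLmem : ∀ q ∈ FL, ∃ i, ∃ p ∈ L i, q = (σ₀.alpha i * p.1, p.2) := by
    intro q hq
    rw [hFLdef, List.mem_flatMap] at hq
    obtain ⟨i, _, hq⟩ := hq
    rw [List.mem_map] at hq
    obtain ⟨p, hp, rfl⟩ := hq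
    exact ⟨i, p, hp, rfl⟩
  have hFLfact : ∀ q ∈ FL, 0 ≤ q.1 ∧ S16.Dist q.2.2 ∧ S16.Good θ μ q.2.1 q.2.2 := by
    intro q hq
    obtain ⟨i, p, hp, rfl⟩ := hFLmem q hq
    obtain ⟨hp1, hp2, _, hp4⟩ := hLmem i p hp
    exact ⟨mul_nonneg (hα0 i) hp1, hp2, hp4⟩
  -- generic sum over the flattened list
  have hFLsum : ∀ g : ℝ × Fin n × (Fin n → ℝ) → ℝ,
      ∑ t : Fin FL.length, g (FL.get t)
        = ∑ i, ((L i).map (fun p => g (σ₀.alpha i * p.1, p.2))).sum := by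
    intro g
    rw [S16.lsum_fin, hFLdef, S16.lsum_bind, ← S16.lsum_finRange]
    congr 1
    apply List.map_congr_left
    intro i _
    rw [List.map_map]
    rfl
  -- weights sum
  have hwt : ∑ t : Fin FL.length, (FL.get t).1 = ∑ i, σ₀.alpha i := by
    rw [hFLsum (fun q => q.1)]
    apply Finset.sum_congr rfl
    intro i _
    show ((L i).map (fun p => σ₀.alpha i * p.1)).sum = _
    rw [S16.lsum_mul, hLwt i, mul_one]
  -- masses
  have hms : ∀ j, ∑ t : Fin FL.length, (FL.get t).1 * (FL.get t).2.2 j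
      = ∑ i, σ₀.alpha i * σ₀.x i j := by
    intro j
    rw [hFLsum (fun q => q.1 * q.2.2 j)]
    apply Finset.sum_congr rfl
    intro i _
    show ((L i).map (fun p => σ₀.alpha i * p.1 * p.2.2 j)).sum = _
    have he : (fun p : ℝ × Fin n × (Fin n → ℝ) => σ₀.alpha i * p.1 * p.2.2 j)
        = fun p => σ₀.alpha i * (p.1 * p.2.2 j) := by
      funext p; ring
    rw [he, S16.lsum_mul, hLmass i j]
  -- Dist/Good useful instances for each t
  have hget : ∀ t : Fin FL.length, FL.get t ∈ FL := fun t => by exact List.get_mem FL t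
  -- sender utility sum
  have hUSsum : ∑ t : Fin FL.length,
        (FL.get t).1 * USone n θ μ (pstar ((FL.get t).2.2)) ((FL.get t).2.2)
      = ∑ i, σ₀.alpha i * USone n θ μ (pstar (σ₀.x i)) (σ₀.x i) := by
    have h1 : ∀ t : Fin FL.length,
        (FL.get t).1 * USone n θ μ (pstar ((FL.get t).2.2)) ((FL.get t).2.2)
          = (FL.get t).1 * S16.Mv θ μ (FL.get t).2.1 := by
      intro t
      obtain ⟨_, hD, hG⟩ := hFLfact _ (hget t)
      rw [(S16.good_pstar hθpos hθmono hμ0 hμ1 hpstar hD hG).2]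
    rw [Finset.sum_congr rfl (fun t _ => h1 t), hFLsum (fun q => q.1 * S16.Mv θ μ q.2.1)]
    apply Finset.sum_congr rfl
    intro i _
    show ((L i).map (fun p => σ₀.alpha i * p.1 * S16.Mv θ μ p.2.1)).sum = _
    have he : (fun p : ℝ × Fin n × (Fin n → ℝ) => σ₀.alpha i * p.1 * S16.Mv θ μ p.2.1)
        = fun p => σ₀.alpha i * (p.1 * S16.Mv θ μ p.2.1) := by
      funext p; ring
    rw [he, S16.lsum_mul, hLUS i,
      ← S16.US_pstar_eq_phiv hθmono hμ0 hμ1 hpstar ⟨hx0 i, hx1 i⟩]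
  -- BP
  have hBPσ : BP n xstar σ := by
    refine ⟨hαT0, ?_, ?_, hxT0, hxT1, ?_, ?_, ?_⟩
    · intro t
      exact (hFLfact _ (hget t)).1
    · show σ₀.alphaT + ∑ t : Fin FL.length, (FL.get t).1 = 1
      rw [hwt]; exact hsum0
    · intro t j
      exact (hFLfact _ (hget t)).2.1.1 j
    · intro t
      exact (hFLfact _ (hget t)).2.1.2
    · intro j
      show σ₀.alphaT * σ₀.xT j + ∑ t : Fin FL.length, (FL.get t).1 * (FL.get t).2.2 j
        = xstar j
      rw [hms j]; exact hmarg j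
  -- sender utility equality
  have hUSeq : USpol n θ μ pstar σ = USpol n θ μ pstar σ₀ := by
    show σ₀.alphaT * μ + ∑ t : Fin FL.length,
        (FL.get t).1 * USone n θ μ (pstar ((FL.get t).2.2)) ((FL.get t).2.2) = _
    rw [hUSsum]; rfl
  -- IC
  have hICσ : ICpol n θ μ δ ubar pstar σ := by
    intro k
    rw [hUSeq]
    exact hσ₀IC k
  -- LTT
  have hLTTσ : LTT n θ μ pstar σ := by
    intro t
    obtain ⟨_, hD, hG⟩ := hFLfact _ (hget t)
    refine ⟨(FL.get t).2.1, hG.1, ?_, ?_⟩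
    · intro k hk
      exact hG.2.1 k (ne_of_gt hk)
    · exact (S16.good_pstar hθpos hθmono hμ0 hμ1 hpstar hD hG).1
  -- platform utility: σ at least as good
  have hUPge : UPpol n θ μ pstar σ₀ ≤ UPpol n θ μ pstar σ := by
    show σ₀.alphaT * μ * (∑ j, σ₀.xT j * θ j) + ∑ i, σ₀.alpha i * S16.UPone n θ μ pstar (σ₀.x i)
      ≤ σ₀.alphaT * μ * (∑ j, σ₀.xT j * θ j) + ∑ t : Fin FL.length,
          (FL.get t).1 * S16.UPone n θ μ pstar ((FL.get t).2.2)
    have h1 : ∀ t : Fin FL.length,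
        (FL.get t).1 * S16.UPone n θ μ pstar ((FL.get t).2.2)
          = (FL.get t).1 * (μ * (∑ k, (FL.get t).2.2 k * θ k) + μ
              - S16.Mv θ μ (FL.get t).2.1) := by
      intro t
      obtain ⟨_, hD, hG⟩ := hFLfact _ (hget t)
      rw [S16.UPone_good hθpos hθmono hμ0 hμ1 hpstar hD hG]
    rw [Finset.sum_congr rfl (fun t _ => h1 t),
      hFLsum (fun q => q.1 * (μ * (∑ k, q.2.2 k * θ k) + μ - S16.Mv θ μ q.2.1))]
    apply add_le_add_right
    apply Finset.sum_le_sum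
    intro i _
    -- compute the inner list sum for component i
    have he : (fun p : ℝ × Fin n × (Fin n → ℝ) =>
        σ₀.alpha i * p.1 * (μ * (∑ k, p.2.2 k * θ k) + μ - S16.Mv θ μ p.2.1))
        = fun p => (σ₀.alpha i * μ) * (∑ k, (p.1 * p.2.2 k) * θ k)
            + ((σ₀.alpha i * μ) * p.1 + (-(σ₀.alpha i)) * (p.1 * S16.Mv θ μ p.2.1)) := by
      funext p
      have h3 : (σ₀.alpha i * μ) * (∑ k, (p.1 * p.2.2 k) * θ k)
          = (σ₀.alpha i * μ * p.1) * (∑ k, p.2.2 k * θ k) := by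
        rw [Finset.mul_sum, Finset.mul_sum]
        exact Finset.sum_congr rfl (fun k _ => by ring)
      rw [h3]; ring
    have hswap : ((L i).map (fun p : ℝ × Fin n × (Fin n → ℝ) =>
        ∑ k, (p.1 * p.2.2 k) * θ k)).sum = ∑ k, σ₀.x i k * θ k := by
      rw [S16.lsum_swap (L i) (fun p k => (p.1 * p.2.2 k) * θ k)]
      apply Finset.sum_congr rfl
      intro k _
      have he2 : (fun p : ℝ × Fin n × (Fin n → ℝ) => p.1 * p.2.2 k * θ k)
          = fun p => θ k * (p.1 * p.2.2 k) := by funext p; ring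
      rw [he2, S16.lsum_mul, hLmass i k]
      ring
    show σ₀.alpha i * S16.UPone n θ μ pstar (σ₀.x i)
      ≤ ((L i).map (fun p => σ₀.alpha i * p.1 *
          (μ * (∑ k, p.2.2 k * θ k) + μ - S16.Mv θ μ p.2.1))).sum
    rw [he, S16.lsum_add, S16.lsum_mul, S16.lsum_add, S16.lsum_mul, S16.lsum_mul,
      hswap, hLwt i, hLUS i,
      ← S16.US_pstar_eq_phiv hθmono hμ0 hμ1 hpstar ⟨hx0 i, hx1 i⟩]
    have hb := S16.UPone_le hθpos hθmono hμ0 hμ1 hpstar (w := σ₀.x i) ⟨hx0 i, hx1 i⟩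
    have ha := hα0 i
    nlinarith [hb]
  have hUPeq : UPpol n θ μ pstar σ = UPpol n θ μ pstar σ₀ :=
    le_antisymm (hσ₀opt σ hBPσ hICσ) hUPge
  exact ⟨σ, hBPσ, hICσ, hLTTσ, rfl, rfl, hUSeq, hUPeq,
    fun σ' hBP' hIC' => le_trans (hσ₀opt σ' hBP' hIC') (le_of_eq hUPeq.symm)⟩
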